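/- Let I be a small category. (i) For every functor F : I ⥤ Cat and every object i of I, the inclusion F(i) ⥤ (∫F)/i, a ↦ ((i, a), 1_i), has a left adjoint ε_{F,i} : (∫F)/i ⥤ F(i) given by ((j, a), p : j ⟶ i) ↦ F(p)(a); in particular ε_{F,i} is aspheric. (ii) For every small category A and every functor v : A ⥤ I, the functor A ⥤ ∫(i ↦ v/i), a ↦ (v a, (a, 1_{v a})) (where i ↦ v/i is the functor I ⥤ Cat of comma categories v/i with objects (a, p : v a ⟶ i)), has a right adjoint given by (i, (a, p : v a ⟶ i)) ↦ a; in particular it is aspheric. -/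

import Mathlib

open CategoryTheory Limits

namespace Paper

/-- A right asphericity structure: a class of small categories satisfying (As1): every
small category having a terminal object belongs to the class, and (As2): if `u : A ⥤ B`
is a functor with `B` in the class and all comma categories `A/b` in the class, then `A`
is in the class. -/
def IsRightAsphericityStructure (𝒜 : Set Cat.{0,0}) : Prop :=
  (∀ C : Cat.{0,0}, HasTerminal C → C ∈ 𝒜) ∧
  (∀ (A B : Cat.{0,0}) (u : A ⥤ B), B ∈ 𝒜 →
    (∀ b : B, Cat.of (CostructuredArrow u b) ∈ 𝒜) → A ∈ 𝒜)

/-- A functor between small categories is aspheric (w.r.t. a class 𝒜 of small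
categories) if all its comma categories `A/b` belong to 𝒜. -/
def Aspheric (𝒜 : Set Cat.{0,0}) {A B : Cat.{0,0}} (u : A ⥤ B) : Prop :=
  ∀ b : B, Cat.of (CostructuredArrow u b) ∈ 𝒜

/-- The inclusion `F(i) ⥤ (∫F)/i`, `a ↦ ((i,a), 1_i)`. -/
def inclFiberComma {I : Cat.{0,0}} (F : ↥I ⥤ Cat.{0,0}) (i : I) :
    ↥(F.obj i) ⥤ CostructuredArrow (Grothendieck.forget F) i where
  obj a := CostructuredArrow.mk (Y := (Grothendieck.ι F i).obj a) (𝟙 i)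
  map {a a'} f := CostructuredArrow.homMk ((Grothendieck.ι F i).map f) (by
    simp [Grothendieck.forget]; exact Category.id_comp _)
  map_id a := by apply CostructuredArrow.ext; exact (Grothendieck.ι F i).map_id a
  map_comp f g := by apply CostructuredArrow.ext; exact (Grothendieck.ι F i).map_comp f g

/-- The functor `ε_{F,i} : (∫F)/i ⥤ F(i)`, `((j,a), p : j ⟶ i) ↦ F(p)(a)`. -/
def epsFunctor {I : Cat.{0,0}} (F : ↥I ⥤ Cat.{0,0}) (i : I) :
    CostructuredArrow (Grothendieck.forget F) i ⥤ ↥(F.obj i) where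
  obj X := (F.map X.hom).toFunctor.obj X.left.fiber
  map {X X'} φ :=
    eqToHom (show (F.map X.hom).toFunctor.obj X.left.fiber
        = (F.map X'.hom).toFunctor.obj ((F.map φ.left.base).toFunctor.obj X.left.fiber) from by
      rw [← CostructuredArrow.w φ, F.map_comp]; rfl) ≫
      (F.map X'.hom).toFunctor.map φ.left.fiber
  map_id X := by
    have hf : (𝟙 X : X ⟶ X).left.fiber = eqToHom (by simp) := Grothendieck.id_fiber _
    rw [hf]
    have key : ∀ {C D : Cat.{0,0}} (G : ↑C ⥤ ↑D) {a b : ↑C} (h1 : G.obj b = G.obj a)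
        (h2 : a = b), eqToHom h1 ≫ G.map (eqToHom h2) = 𝟙 (G.obj b) := by
      intro C D G a b h1 h2; subst h2; simp
    exact key _ _ _
  map_comp {X Y Z} φ ψ := by
    have hY : (F.map Y.hom).toFunctor =
        (F.map ((Grothendieck.forget F).map ψ.left)).toFunctor ⋙ (F.map Z.hom).toFunctor := by
      rw [← CostructuredArrow.w ψ, F.map_comp]; rfl
    have hf : (φ ≫ ψ).left.fiber = eqToHom (by simp) ≫
        (F.map ψ.left.base).toFunctor.map φ.left.fiber ≫ ψ.left.fiber :=
      Grothendieck.comp_fiber _ _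
    rw [hf]
    have key : ∀ {C C' D : Cat.{0,0}} (H : ↑C ⥤ ↑C') (G : ↑C' ⥤ ↑D) (K : ↑C ⥤ ↑D)
        (hK : K = H ⋙ G) {u v : ↑C} (f : u ⟶ v) {s w : ↑C'} (g : H.obj v ⟶ w) {t : ↑D}
        (e1 : t = G.obj s) (e2 : s = H.obj u) (e3 : t = K.obj u)
        (e4 : K.obj v = G.obj (H.obj v)),
        eqToHom e1 ≫ G.map (eqToHom e2 ≫ H.map f ≫ g) =
          (eqToHom e3 ≫ K.map f) ≫ eqToHom e4 ≫ G.map g := by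
      intro C C' D H G K hK u v f s w g t e1 e2 e3 e4
      subst hK; subst e2; simp
    exact key _ _ _ hY _ _ _ _ _ _

/-- The functor `A ⥤ ∫(i ↦ A/i)`, `a ↦ (v a, (a, 1_{v a}))`. -/
def etaFunctor {A I : Cat.{0,0}} (v : A ⟶ I) :
    ↥A ⥤ Grothendieck (CostructuredArrow.functor v.toFunctor) where
  obj a := ⟨v.toFunctor.obj a, CostructuredArrow.mk (𝟙 (v.toFunctor.obj a))⟩
  map {a a'} f := ⟨v.toFunctor.map f, CostructuredArrow.homMk f (by simp; exact (Category.id_comp _).symm)⟩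
  map_id a := by
    apply Grothendieck.ext _ _ (by simp)
    apply CostructuredArrow.ext
    erw [Comma.comp_left, CostructuredArrow.eqToHom_left, CostructuredArrow.eqToHom_left]
    · exact Category.comp_id _
    · simp
  map_comp f g := by
    apply Grothendieck.ext _ _ (by simp)
    apply CostructuredArrow.ext
    erw [Comma.comp_left, Comma.comp_left, CostructuredArrow.eqToHom_left,
      CostructuredArrow.eqToHom_left]
    rfl

/-- The functor `∫(i ↦ A/i) ⥤ A`, `(i, (a, p : v a ⟶ i)) ↦ a`. -/
def rhoFunctor {A I : Cat.{0,0}} (v : A ⟶ I) :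
    Grothendieck (CostructuredArrow.functor v.toFunctor) ⥤ ↥A where
  obj X := X.fiber.left
  map {X Y} φ := φ.fiber.left
  map_id X := by
    simp
    erw [CostructuredArrow.eqToHom_left]
    rfl
  map_comp φ ψ := by
    simp
    erw [Comma.comp_left, Comma.comp_left, CostructuredArrow.eqToHom_left]
    exact Category.id_comp _




lemma aspheric_of_right_adjoint (𝒜 : Set Cat.{0,0}) (h𝒜 : IsRightAsphericityStructure 𝒜)
    {A B : Cat.{0,0}} {u : A ⥤ B} {r : B ⥤ A} (adj : u ⊣ r) : Aspheric 𝒜 u := fun b =>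
  h𝒜.1 _ (IsTerminal.hasTerminal (CategoryTheory.mkTerminalOfRightAdjoint (F := u) (G := r) adj b))

lemma eqToHom_comp_split {C : Type*} [Category C] {x y z w : C} (p : x = z) (q : x = y)
    (r : y = z) (h : z ⟶ w) : eqToHom p ≫ h = eqToHom q ≫ eqToHom r ≫ h := by
  subst q r; simp

lemma eqToHom_comp_split2 {C : Type*} [Category C] {x y z u v w : C} (a : x = y) (b : y = z)
    (d : x = z) (M : z ⟶ u) (c c' : u = v) (g : v ⟶ w) :
    eqToHom a ≫ eqToHom b ≫ M ≫ eqToHom c ≫ g = (eqToHom d ≫ M) ≫ eqToHom c' ≫ g := by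
  subst a b c; simp

set_option maxHeartbeats 1000000 in
def adjEps {I : Cat.{0,0}} (F : ↥I ⥤ Cat.{0,0}) (i : I) :
    epsFunctor F i ⊣ inclFiberComma F i :=
  Adjunction.mkOfHomEquiv {
    homEquiv := fun X a => {
      toFun := fun g => CostructuredArrow.homMk ⟨X.hom, g⟩ (by simp [Grothendieck.forget, inclFiberComma]; exact Category.comp_id _)
      invFun := fun φ =>
        eqToHom (show (epsFunctor F i).obj X = (F.map φ.left.base).toFunctor.obj X.left.fiber by
          have h : φ.left.base = X.hom := by
            exact (Category.comp_id φ.left.base).symm.trans (CostructuredArrow.w φ)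
          rw [h]; rfl) ≫ φ.left.fiber
      left_inv := fun g => by exact Category.id_comp g
      right_inv := fun φ => by
        apply CostructuredArrow.ext
        have h : φ.left.base = X.hom := by
          exact (Category.comp_id φ.left.base).symm.trans (CostructuredArrow.w φ)
        apply Grothendieck.ext _ _ h.symm
        change eqToHom _ ≫ eqToHom _ ≫ φ.left.fiber = φ.left.fiber
        exact (eqToHom_trans_assoc _ _ _).trans (Category.id_comp _)
      }
    homEquiv_naturality_left_symm := fun {X X' a} f g => by
      have hb : g.left.base = X'.hom := by
        exact (Category.comp_id g.left.base).symm.trans (CostructuredArrow.w g)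
      have hF : F.map (Grothendieck.Hom.base g.left) = F.map X'.hom := congrArg (fun k => F.map k) hb
      have hc := Functor.congr_hom (congrArg Cat.Hom.toFunctor hF) f.left.fiber
      change eqToHom _ ≫ (eqToHom _ ≫ (F.map g.left.base).toFunctor.map f.left.fiber ≫ g.left.fiber) = (eqToHom _ ≫ (F.map X'.hom).toFunctor.map f.left.fiber) ≫ eqToHom _ ≫ g.left.fiber
      rw [hc]
      simp [eqToHom_map]
      exact eqToHom_comp_split2 _ _ _ _ _ _ _
    homEquiv_naturality_right := fun {X a a'} g f => by
      apply CostructuredArrow.ext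
      apply Grothendieck.ext
      · change eqToHom _ ≫ (g ≫ f) = eqToHom _ ≫ (F.map (𝟙 i)).toFunctor.map g ≫ eqToHom _ ≫ f
        rw [Functor.congr_hom (congrArg Cat.Hom.toFunctor (F.map_id i)) g]
        simp [eqToHom_map]
        exact eqToHom_comp_split _ _ _ _
      · exact (Category.comp_id _).symm }

lemma groth_hom_ext {A I : Cat.{0,0}} {v : A ⟶ I}
    {P Q : Grothendieck (CostructuredArrow.functor v.toFunctor)} (φ ψ : Grothendieck.Hom P Q)
    (hb : φ.base = ψ.base) (hf : φ.fiber.left = ψ.fiber.left) : φ = ψ := by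
  cases φ with | mk b1 f1 => cases ψ with | mk b2 f2 =>
  dsimp only at hb hf
  subst hb
  congr 1
  exact CostructuredArrow.hom_ext _ _ hf

def adjEta {A I : Cat.{0,0}} (v : A ⟶ I) : etaFunctor v ⊣ rhoFunctor v :=
  Adjunction.mkOfHomEquiv {
    homEquiv := fun a X => {
      toFun := fun g => g.fiber.left
      invFun := fun f =>
        ⟨v.toFunctor.map f ≫ X.fiber.hom, CostructuredArrow.homMk f (by simp [etaFunctor]; exact (Category.id_comp _).symm)⟩
      left_inv := fun g => by
        apply Grothendieck.ext
        · apply CostructuredArrow.ext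
          erw [Comma.comp_left, CostructuredArrow.eqToHom_left]
          exact Category.id_comp _
        · dsimp only
          exact (CostructuredArrow.w g.fiber).trans (Category.id_comp _)
      right_inv := fun f => by rfl }
    homEquiv_naturality_left_symm := fun {a a' X} f g => by
      apply groth_hom_ext
      · exact (congrArg (· ≫ X.fiber.hom) (v.toFunctor.map_comp f g)).trans (Category.assoc _ _ _)
      · refine Eq.trans ?_ ((rhoFunctor v).map_comp ((etaFunctor v).map f) _).symm
        rfl
    homEquiv_naturality_right := fun {a X X'} g f => by
      change (g ≫ f).fiber.left = g.fiber.left ≫ f.fiber.left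
      erw [Grothendieck.comp_fiber, Comma.comp_left, Comma.comp_left, CostructuredArrow.eqToHom_left]
      exact Category.id_comp _ }


/-- (i) For `F : I ⥤ Cat` and `i : I`, the inclusion `F(i) ⥤ (∫F)/i` has the left
adjoint `ε_{F,i} : ((j,a), p) ↦ F(p)(a)`; in particular `ε_{F,i}` is aspheric.
(ii) For `v : A ⥤ I`, the functor `A ⥤ ∫(i ↦ A/i)`, `a ↦ (v a, (a, 1_{v a}))`, has the
right adjoint `(i, (a, p)) ↦ a`; in particular it is aspheric. -/
theorem eps_eta_adjunctions (𝒜 : Set Cat.{0,0}) (h𝒜 : IsRightAsphericityStructure 𝒜)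
    {I : Cat.{0,0}} :
    (∀ (F : ↥I ⥤ Cat.{0,0}) (i : I),
      Nonempty (epsFunctor F i ⊣ inclFiberComma F i) ∧
      Aspheric 𝒜 (A := Cat.of (CostructuredArrow (Grothendieck.forget F) i)) (B := F.obj i)
        (epsFunctor F i)) ∧
    (∀ (A : Cat.{0,0}) (v : A ⟶ I),
      Nonempty (etaFunctor v ⊣ rhoFunctor v) ∧
      Aspheric 𝒜 (A := A) (B := Cat.of (Grothendieck (CostructuredArrow.functor v.toFunctor)))
        (etaFunctor v)) := by
  refine ⟨fun F i => ⟨⟨adjEps F i⟩, aspheric_of_right_adjoint 𝒜 h𝒜 (adjEps F i)⟩,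
    fun A v => ⟨⟨adjEta v⟩, aspheric_of_right_adjoint 𝒜 h𝒜 (adjEta v)⟩⟩

end Paper
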